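/- Let G = 2, suppose (1/n)XᵀX = I_p, and let r_j = (1/n)⟨y, x^j⟩. Let α ∈ [0,1], λ_s, λ_d ≥ 0, and let (β̂¹, β̂²) be any global minimizer of the SplitReg objective. If |r_j| > α λ_s and λ_d < 1 + (1−α)λ_s, then β̂¹_j = β̂²_j = soft(r_j, α λ_s)/(1 + (1−α)λ_s + λ_d). -/

import Mathlib

open Finset

/-- The soft-thresholding operator: `soft z γ = sign(z) * max 0 (|z| - γ)`. -/
noncomputable def soft (z γ : ℝ) : ℝ := Real.sign z * max 0 (|z| - γ)

/-- The SplitReg objective function for data `y`, design matrix `X`,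
elastic net mixing parameter `α`, sparsity penalty `lam_s`, diversity penalty `lam_d`,
and coefficient matrix `β` (one column `β g` per group). -/
noncomputable def splitRegObj {n p G : ℕ} (y : Fin n → ℝ) (X : Matrix (Fin n) (Fin p) ℝ)
    (α lam_s lam_d : ℝ) (β : Fin G → Fin p → ℝ) : ℝ :=
  ∑ g : Fin G,
    ((1 / (2 * (n : ℝ))) * ∑ i, (y i - ∑ j, X i j * β g j) ^ 2
      + lam_s * ((1 - α) / 2 * ∑ j, (β g j) ^ 2 + α * ∑ j, |β g j|)
      + lam_d / 2 * ∑ h ∈ Finset.univ.erase g, ∑ j, |β g j| * |β h j|)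

/-- The two-variable coordinatewise objective appearing after decoupling. -/
noncomputable def Fobj (c ld t r a b : ℝ) : ℝ :=
  c * a ^ 2 / 2 + c * b ^ 2 / 2 - r * (a + b) + t * (|a| + |b|) + ld * (|a| * |b|)

lemma keyPos (c ld t r : ℝ) (hld : 0 ≤ ld) (hdc : ld < c) (ht : 0 ≤ t)
    (hr : t < r) (a b : ℝ)
    (hmin : ∀ x z : ℝ, Fobj c ld t r a b ≤ Fobj c ld t r x z) :
    a = (r - t)/(c + ld) ∧ b = (r - t)/(c + ld) := by
  have hcld : 0 < c + ld := by linarith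
  set m := (r - t)/(c + ld) with hm
  have hrm : r = (c + ld) * m + t := by
    rw [hm]; field_simp; ring
  have hm0 : 0 < m := div_pos (by linarith) hcld
  have key : ∀ x z : ℝ, Fobj c ld t r m m + (c - ld)/2*((x-m)^2+(z-m)^2) ≤ Fobj c ld t r x z := by
    intro x z
    have hA : x ≤ |x| := le_abs_self x
    have hB : z ≤ |z| := le_abs_self z
    have hA2 : |x|^2 = x^2 := sq_abs x
    have hB2 : |z|^2 = z^2 := sq_abs z
    have hlm : 0 ≤ ld * m := mul_nonneg hld hm0.le
    have h1 : 0 ≤ (2*ld*m + t) * ((|x|+|z|) - (x+z)) :=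
      mul_nonneg (by linarith) (by linarith)
    have h2 : 0 ≤ ld * (|x|+|z|-2*m)^2 := mul_nonneg hld (sq_nonneg _)
    have hmm : |m| = m := abs_of_pos hm0
    simp only [Fobj, hmm]
    nlinarith [h1, h2, hA2, hB2]
  have h1 := hmin m m
  have h2 := key a b
  have h3 : (c-ld)/2*((a-m)^2+(b-m)^2) ≤ 0 := by linarith
  have ha2 : (a-m)^2 = 0 :=
    le_antisymm (by nlinarith [sq_nonneg (b-m)]) (sq_nonneg _)
  have hb2 : (b-m)^2 = 0 :=
    le_antisymm (by nlinarith [sq_nonneg (a-m)]) (sq_nonneg _)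
  have ha : a - m = 0 := (pow_eq_zero_iff two_ne_zero).mp ha2
  have hb : b - m = 0 := (pow_eq_zero_iff two_ne_zero).mp hb2
  constructor <;> linarith

lemma keyGen (c ld t r : ℝ) (hld : 0 ≤ ld) (hdc : ld < c) (ht : 0 ≤ t)
    (hr : t < |r|) (a b : ℝ)
    (hmin : ∀ x z : ℝ, Fobj c ld t r a b ≤ Fobj c ld t r x z) :
    a = soft r t / (c + ld) ∧ b = soft r t / (c + ld) := by
  have hneg_id : ∀ x z : ℝ, Fobj c ld t (-r) x z = Fobj c ld t r (-x) (-z) := by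
    intro x z
    simp only [Fobj, abs_neg]
    ring
  rcases lt_trichotomy r 0 with hrneg | hrz | hrpos
  · have habs : |r| = -r := abs_of_neg hrneg
    have hmin' : ∀ x z : ℝ, Fobj c ld t (-r) (-a) (-b) ≤ Fobj c ld t (-r) x z := by
      intro x z
      rw [hneg_id, hneg_id, neg_neg, neg_neg]
      exact hmin (-x) (-z)
    obtain ⟨ha, hb⟩ := keyPos c ld t (-r) hld hdc ht (by linarith) (-a) (-b) hmin'
    have hsoft : soft r t = r + t := by
      rw [soft, Real.sign_of_neg hrneg, max_eq_right (by linarith), habs]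
      ring
    constructor
    · rw [hsoft]
      have : a = -((-r - t) / (c + ld)) := by linarith
      rw [this]; ring
    · rw [hsoft]
      have : b = -((-r - t) / (c + ld)) := by linarith
      rw [this]; ring
  · rw [hrz] at hr; simp at hr; linarith
  · have habs : |r| = r := abs_of_pos hrpos
    obtain ⟨ha, hb⟩ := keyPos c ld t r hld hdc ht (by linarith) a b hmin
    have hsoft : soft r t = r - t := by
      rw [soft, Real.sign_of_pos hrpos, max_eq_right (by linarith), habs]
      ring
    rw [hsoft]
    exact ⟨ha, hb⟩

lemma rss_split {n p : ℕ} (hn : 0 < n) (y : Fin n → ℝ) (X : Matrix (Fin n) (Fin p) ℝ)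
    (horth : ∀ j k : Fin p, (1 / (n : ℝ)) * ∑ i, X i j * X i k = if j = k then 1 else 0)
    (j : Fin p) (c : Fin p → ℝ) :
    (1 / (2 * (n : ℝ))) * ∑ i, (y i - ∑ k, X i k * c k) ^ 2
      = (1 / (2 * (n : ℝ))) * ∑ i, (y i - ∑ k ∈ univ.erase j, X i k * c k) ^ 2
        - ((1 / (n : ℝ)) * ∑ i, y i * X i j) * c j + (c j) ^ 2 / 2 := by
  have hn' : (0:ℝ) < n := by exact_mod_cast hn
  have hnne : (n:ℝ) ≠ 0 := ne_of_gt hn'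
  have hXjj : ∑ i, X i j * X i j = (n:ℝ) := by
    have h := horth j j
    rw [if_pos rfl] at h
    field_simp at h
    rw [← h]; exact Finset.sum_congr rfl (fun i _ => by ring)
  have hXkj : ∀ k : Fin p, k ≠ j → ∑ i, X i k * X i j = 0 := by
    intro k hk
    have h := horth k j
    rw [if_neg hk] at h
    field_simp at h
    exact h.trans (mul_zero _)
  have hSX : ∑ i, (∑ k ∈ univ.erase j, X i k * c k) * X i j = 0 := by
    have e : ∀ i, (∑ k ∈ univ.erase j, X i k * c k) * X i j
        = ∑ k ∈ univ.erase j, c k * (X i k * X i j) := by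
      intro i
      rw [Finset.sum_mul]
      exact Finset.sum_congr rfl (fun k _ => by ring)
    rw [Finset.sum_congr rfl (fun i _ => e i), Finset.sum_comm]
    apply Finset.sum_eq_zero
    intro k hk
    rw [← Finset.mul_sum, hXkj k (Finset.ne_of_mem_erase hk), mul_zero]
  have hsum : ∀ i, ∑ k, X i k * c k
      = X i j * c j + ∑ k ∈ univ.erase j, X i k * c k := by
    intro i
    exact (Finset.add_sum_erase univ (fun k => X i k * c k) (mem_univ j)).symm
  have e1 : ∀ i, (y i - ∑ k, X i k * c k) ^ 2
      = ((y i - ∑ k ∈ univ.erase j, X i k * c k) ^ 2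
          + c j ^ 2 * (X i j * X i j))
        - 2 * c j * (y i * X i j - (∑ k ∈ univ.erase j, X i k * c k) * X i j) := by
    intro i
    rw [hsum i]
    ring
  rw [Finset.sum_congr rfl (fun i _ => e1 i), Finset.sum_sub_distrib,
      Finset.sum_add_distrib, ← Finset.mul_sum, ← Finset.mul_sum,
      Finset.sum_sub_distrib, hSX, hXjj]
  field_simp
  ring

lemma obj_formula {n p : ℕ} (hn : 0 < n) (y : Fin n → ℝ) (X : Matrix (Fin n) (Fin p) ℝ)
    (α ls ld : ℝ)
    (horth : ∀ j k : Fin p, (1 / (n : ℝ)) * ∑ i, X i j * X i k = if j = k then 1 else 0)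
    (j : Fin p) (β : Fin 2 → Fin p → ℝ) :
    splitRegObj y X α ls ld β
      = ((1 / (2 * (n:ℝ))) * ∑ i, (y i - ∑ k ∈ univ.erase j, X i k * β 0 k) ^ 2
        + (1 / (2 * (n:ℝ))) * ∑ i, (y i - ∑ k ∈ univ.erase j, X i k * β 1 k) ^ 2
        + ls * ((1-α)/2 * ∑ k ∈ univ.erase j, (β 0 k) ^ 2 + α * ∑ k ∈ univ.erase j, |β 0 k|)
        + ls * ((1-α)/2 * ∑ k ∈ univ.erase j, (β 1 k) ^ 2 + α * ∑ k ∈ univ.erase j, |β 1 k|)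
        + ld / 2 * ∑ k ∈ univ.erase j, |β 0 k| * |β 1 k|
        + ld / 2 * ∑ k ∈ univ.erase j, |β 1 k| * |β 0 k|)
      + Fobj (1 + (1-α)*ls) ld (α*ls) ((1 / (n:ℝ)) * ∑ i, y i * X i j) (β 0 j) (β 1 j) := by
  have e0 : (univ : Finset (Fin 2)).erase 0 = {1} := by decide
  have e1 : (univ : Finset (Fin 2)).erase 1 = {0} := by decide
  simp only [splitRegObj, Fin.sum_univ_two, e0, e1, Finset.sum_singleton]
  rw [rss_split hn y X horth j (β 0), rss_split hn y X horth j (β 1),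
      ← Finset.add_sum_erase univ (fun k => (β 0 k) ^ 2) (mem_univ j),
      ← Finset.add_sum_erase univ (fun k => (β 1 k) ^ 2) (mem_univ j),
      ← Finset.add_sum_erase univ (fun k => |β 0 k|) (mem_univ j),
      ← Finset.add_sum_erase univ (fun k => |β 1 k|) (mem_univ j),
      ← Finset.add_sum_erase univ (fun k => |β 0 k| * |β 1 k|) (mem_univ j),
      ← Finset.add_sum_erase univ (fun k => |β 1 k| * |β 0 k|) (mem_univ j)]
  simp only [Fobj]
  ring

/-- **Proposition 1, part 2(a) (orthogonal design, `G = 2`).**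
If `|r_j| > α λ_s` and `λ_d < 1 + (1-α) λ_s`, then for any global minimizer of the
SplitReg objective the `j`-th coefficients of the two models are both equal to
`soft(r_j, α λ_s) / (1 + (1-α) λ_s + λ_d)`. -/
theorem splitreg_orthogonal_small_ld
    {n p : ℕ} (hn : 0 < n) (y : Fin n → ℝ) (X : Matrix (Fin n) (Fin p) ℝ)
    (α lam_s lam_d : ℝ) (hα : α ∈ Set.Icc (0 : ℝ) 1) (hs : 0 ≤ lam_s) (hd : 0 ≤ lam_d)
    (horth : ∀ j k : Fin p, (1 / (n : ℝ)) * ∑ i, X i j * X i k = if j = k then 1 else 0)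
    (βhat : Fin 2 → Fin p → ℝ)
    (hmin : ∀ b : Fin 2 → Fin p → ℝ,
      splitRegObj y X α lam_s lam_d βhat ≤ splitRegObj y X α lam_s lam_d b)
    (j : Fin p)
    (hr : α * lam_s < |(1 / (n : ℝ)) * ∑ i, y i * X i j|)
    (hld : lam_d < 1 + (1 - α) * lam_s) :
    βhat 0 j = soft ((1 / (n : ℝ)) * ∑ i, y i * X i j) (α * lam_s)
        / (1 + (1 - α) * lam_s + lam_d) ∧
    βhat 1 j = soft ((1 / (n : ℝ)) * ∑ i, y i * X i j) (α * lam_s)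
        / (1 + (1 - α) * lam_s + lam_d) := by
  set r := (1 / (n : ℝ)) * ∑ i, y i * X i j with hrdef
  have ht : 0 ≤ α * lam_s := mul_nonneg hα.1 hs
  have hFmin : ∀ a b : ℝ,
      Fobj (1 + (1-α)*lam_s) lam_d (α*lam_s) r (βhat 0 j) (βhat 1 j)
        ≤ Fobj (1 + (1-α)*lam_s) lam_d (α*lam_s) r a b := by
    intro a b
    set β' : Fin 2 → Fin p → ℝ :=
      fun g k => if k = j then (if g = 0 then a else b) else βhat g k with hβ'
    have hag : ∀ (g : Fin 2) (k : Fin p), k ∈ univ.erase j → β' g k = βhat g k := by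
      intro g k hk
      simp only [hβ']
      rw [if_neg (Finset.ne_of_mem_erase hk)]
    have hv0 : β' 0 j = a := by simp [hβ']
    have hv1 : β' 1 j = b := by
      simp only [hβ', if_pos rfl]
      rw [if_neg (by decide : (1 : Fin 2) ≠ 0)]
    have h := hmin β'
    rw [obj_formula hn y X α lam_s lam_d horth j βhat,
        obj_formula hn y X α lam_s lam_d horth j β'] at h
    have s1 : ∑ i, (y i - ∑ k ∈ univ.erase j, X i k * β' 0 k) ^ 2
        = ∑ i, (y i - ∑ k ∈ univ.erase j, X i k * βhat 0 k) ^ 2 :=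
      Finset.sum_congr rfl (fun i _ => by
        rw [Finset.sum_congr rfl (fun k hk => by rw [hag 0 k hk])])
    have s2 : ∑ i, (y i - ∑ k ∈ univ.erase j, X i k * β' 1 k) ^ 2
        = ∑ i, (y i - ∑ k ∈ univ.erase j, X i k * βhat 1 k) ^ 2 :=
      Finset.sum_congr rfl (fun i _ => by
        rw [Finset.sum_congr rfl (fun k hk => by rw [hag 1 k hk])])
    have s3 : ∑ k ∈ univ.erase j, (β' 0 k) ^ 2
        = ∑ k ∈ univ.erase j, (βhat 0 k) ^ 2 :=
      Finset.sum_congr rfl (fun k hk => by rw [hag 0 k hk])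
    have s4 : ∑ k ∈ univ.erase j, (β' 1 k) ^ 2
        = ∑ k ∈ univ.erase j, (βhat 1 k) ^ 2 :=
      Finset.sum_congr rfl (fun k hk => by rw [hag 1 k hk])
    have s5 : ∑ k ∈ univ.erase j, |β' 0 k|
        = ∑ k ∈ univ.erase j, |βhat 0 k| :=
      Finset.sum_congr rfl (fun k hk => by rw [hag 0 k hk])
    have s6 : ∑ k ∈ univ.erase j, |β' 1 k|
        = ∑ k ∈ univ.erase j, |βhat 1 k| :=
      Finset.sum_congr rfl (fun k hk => by rw [hag 1 k hk])
    have s7 : ∑ k ∈ univ.erase j, |β' 0 k| * |β' 1 k|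
        = ∑ k ∈ univ.erase j, |βhat 0 k| * |βhat 1 k| :=
      Finset.sum_congr rfl (fun k hk => by rw [hag 0 k hk, hag 1 k hk])
    have s8 : ∑ k ∈ univ.erase j, |β' 1 k| * |β' 0 k|
        = ∑ k ∈ univ.erase j, |βhat 1 k| * |βhat 0 k| :=
      Finset.sum_congr rfl (fun k hk => by rw [hag 0 k hk, hag 1 k hk])
    rw [s1, s2, s3, s4, s5, s6, s7, s8, hv0, hv1] at h
    linarith
  exact keyGen (1 + (1-α)*lam_s) lam_d (α*lam_s) r hd (by linarith) ht hr
    (βhat 0 j) (βhat 1 j) hFmin
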